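/- Let 𝕜 be an RCLike field (ℝ or ℂ), let E and F be finite-dimensional inner product spaces over 𝕜, and equip E × F with the product inner product ⟨(x,y),(x',y')⟩ = ⟨x,x'⟩ + ⟨y,y'⟩. Let T : E →ₗ[𝕜] F be a linear map, let A be the subspace E × {0}, and let B = {(x, T x) : x ∈ E} be the graph of T. Then for a subspace X of E × F the following are equivalent: (i) X = (X ⊓ A) ⊔ (X ⊓ Aᗮ) and X = (X ⊓ B) ⊔ (X ⊓ Bᗮ); (ii) there exist subspaces V ≤ E and W ≤ F with T v ∈ W for all v ∈ V, (adjoint T) w ∈ V for all w ∈ W, and X = V × W (the product submodule). -/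

import Mathlib

open FiniteDimensional Module

section aux
variable {𝕜 : Type*} [RCLike 𝕜] {E F : Type*}
  [NormedAddCommGroup E] [InnerProductSpace 𝕜 E] [FiniteDimensional 𝕜 E]
  [NormedAddCommGroup F] [InnerProductSpace 𝕜 F] [FiniteDimensional 𝕜 F]

lemma aux_inj (T : E →ₗ[𝕜] F) :
    Function.Injective ((LinearMap.id : E →ₗ[𝕜] E) + T.adjoint ∘ₗ T) := by
  rw [← LinearMap.ker_eq_bot, LinearMap.ker_eq_bot']
  intro x hx
  simp only [LinearMap.add_apply, LinearMap.id_apply, LinearMap.comp_apply] at hx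
  have h : (inner 𝕜 x x : 𝕜) + inner 𝕜 (T x) (T x) = 0 := by
    have h0 : (inner 𝕜 x (x + T.adjoint (T x)) : 𝕜) = 0 := by rw [hx, inner_zero_right]
    rw [inner_add_right, LinearMap.adjoint_inner_right] at h0
    exact h0
  rw [inner_self_eq_norm_sq_to_K, inner_self_eq_norm_sq_to_K] at h
  have h2 : ((‖x‖ ^ 2 + ‖T x‖ ^ 2 : ℝ) : 𝕜) = 0 := by push_cast; exact h
  have h3 : (‖x‖ ^ 2 + ‖T x‖ ^ 2 : ℝ) = 0 := by exact_mod_cast h2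
  have h4 : ‖x‖ ^ 2 = 0 := by nlinarith [sq_nonneg ‖x‖, sq_nonneg ‖T x‖]
  exact norm_eq_zero.mp (pow_eq_zero_iff two_ne_zero |>.mp h4)

lemma aux_surj (T : E →ₗ[𝕜] F) (V : Submodule 𝕜 E)
    (hV : ∀ x ∈ V, T.adjoint (T x) ∈ V) {v : E} (hv : v ∈ V) :
    ∃ x ∈ V, x + T.adjoint (T x) = v := by
  set L : E →ₗ[𝕜] E := (LinearMap.id : E →ₗ[𝕜] E) + T.adjoint ∘ₗ T with hL
  have hLV : ∀ x ∈ V, L x ∈ V := fun x hx => by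
    simp only [hL, LinearMap.add_apply, LinearMap.id_apply, LinearMap.comp_apply]
    exact V.add_mem hx (hV x hx)
  have hinj : Function.Injective (L.restrict hLV) := by
    intro a b hab
    have : L a.1 = L b.1 := by
      have := congrArg Subtype.val hab
      simpa [LinearMap.restrict_apply] using this
    exact Subtype.ext (aux_inj T this)
  obtain ⟨x, hx⟩ := LinearMap.surjective_of_injective hinj ⟨v, hv⟩
  refine ⟨x.1, x.2, ?_⟩
  have := congrArg Subtype.val hx
  simpa [LinearMap.restrict_apply, hL] using this

lemma aux_eqsub (T : E →ₗ[𝕜] F) (V V' : Submodule 𝕜 E) (hle : V' ≤ V)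
    (hsub : ∀ v ∈ V, ∃ x ∈ V', x + T.adjoint (T x) = v) : V = V' := by
  set L : E →ₗ[𝕜] E := (LinearMap.id : E →ₗ[𝕜] E) + T.adjoint ∘ₗ T with hL
  have h1 : V ≤ V'.map L := by
    intro v hv
    obtain ⟨x, hx, hxv⟩ := hsub v hv
    exact ⟨x, hx, by simpa [hL] using hxv⟩
  have heq : finrank 𝕜 (V'.map L) = finrank 𝕜 V' :=
    (Submodule.equivMapOfInjective L (aux_inj T) V').finrank_eq.symm
  have h2 : finrank 𝕜 V ≤ finrank 𝕜 V' := heq ▸ Submodule.finrank_mono h1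
  exact (Submodule.eq_of_le_of_finrank_le hle h2).symm


end aux


theorem commutes_with_graph_iff_invariant_product {𝕜 : Type*} [RCLike 𝕜]
    {E F : Type*}
    [NormedAddCommGroup E] [InnerProductSpace 𝕜 E] [FiniteDimensional 𝕜 E]
    [NormedAddCommGroup F] [InnerProductSpace 𝕜 F] [FiniteDimensional 𝕜 F]
    (T : E →ₗ[𝕜] F)
    (A B : Submodule 𝕜 (WithLp 2 (E × F)))
    (hA : A = Submodule.comap
      ((WithLp.linearEquiv 2 𝕜 (E × F)) : WithLp 2 (E × F) →ₗ[𝕜] E × F)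
      ((⊤ : Submodule 𝕜 E).prod (⊥ : Submodule 𝕜 F)))
    (hB : B = Submodule.comap
      ((WithLp.linearEquiv 2 𝕜 (E × F)) : WithLp 2 (E × F) →ₗ[𝕜] E × F)
      (LinearMap.graph T))
    (X : Submodule 𝕜 (WithLp 2 (E × F))) :
    (X = (X ⊓ A) ⊔ (X ⊓ Aᗮ) ∧ X = (X ⊓ B) ⊔ (X ⊓ Bᗮ)) ↔
    (∃ (V : Submodule 𝕜 E) (W : Submodule 𝕜 F),
      (∀ v ∈ V, T v ∈ W) ∧ (∀ w ∈ W, LinearMap.adjoint T w ∈ V) ∧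
      X = Submodule.comap
        ((WithLp.linearEquiv 2 𝕜 (E × F)) : WithLp 2 (E × F) →ₗ[𝕜] E × F)
        (V.prod W)) := by
  have hAmem : ∀ p : WithLp 2 (E × F), p ∈ A ↔ p.snd = 0 := by
    intro p
    rw [hA]
    simp [Submodule.mem_comap, Submodule.mem_prod, WithLp.linearEquiv_apply]
  have hBmem : ∀ p : WithLp 2 (E × F), p ∈ B ↔ p.snd = T p.fst := by
    intro p
    rw [hB]
    simp [Submodule.mem_comap, LinearMap.mem_graph_iff, WithLp.linearEquiv_apply]
  have hAomem : ∀ p : WithLp 2 (E × F), p ∈ Aᗮ ↔ p.fst = 0 := by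
    intro p
    rw [Submodule.mem_orthogonal]
    constructor
    · intro h
      have h0 := h ((WithLp.equiv 2 (E × F)).symm (p.fst, 0))
        (by rw [hAmem]; simp)
      simp only [WithLp.prod_inner_apply, WithLp.equiv_symm_apply, WithLp.ofLp_toLp, WithLp.ofLp_fst, WithLp.ofLp_snd,
        inner_zero_left, add_zero] at h0
      exact inner_self_eq_zero.mp h0
    · intro h q hq
      rw [hAmem] at hq
      simp [WithLp.prod_inner_apply, hq, h]
  have hBomem : ∀ p : WithLp 2 (E × F),
      p ∈ Bᗮ ↔ p.fst + T.adjoint p.snd = 0 := by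
    intro p
    rw [Submodule.mem_orthogonal]
    constructor
    · intro h
      set z := p.fst + T.adjoint p.snd with hz
      have h0 := h ((WithLp.equiv 2 (E × F)).symm (z, T z))
        (by rw [hBmem]; simp)
      simp only [WithLp.prod_inner_apply, WithLp.equiv_symm_apply, WithLp.ofLp_toLp, WithLp.ofLp_fst, WithLp.ofLp_snd] at h0
      rw [← LinearMap.adjoint_inner_right, ← inner_add_right, ← hz] at h0
      exact inner_self_eq_zero.mp h0
    · intro h q hq
      rw [hBmem] at hq
      rw [WithLp.prod_inner_apply, WithLp.ofLp_fst q, WithLp.ofLp_fst p, WithLp.ofLp_snd q,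
        WithLp.ofLp_snd p, hq, ← LinearMap.adjoint_inner_right (𝕜 := 𝕜),
        ← inner_add_right, h, inner_zero_right]
  set ι : (E × F) →ₗ[𝕜] WithLp 2 (E × F) :=
    ((WithLp.linearEquiv 2 𝕜 (E × F)).symm : (E × F) →ₗ[𝕜] WithLp 2 (E × F)) with hι
  have hιfst : ∀ q : E × F, (ι q).fst = q.fst := by
    intro q; simp [hι, WithLp.linearEquiv_symm_apply]
  have hιsnd : ∀ q : E × F, (ι q).snd = q.snd := by
    intro q; simp [hι, WithLp.linearEquiv_symm_apply]
  have hιeta : ∀ p : WithLp 2 (E × F), ι (p.fst, p.snd) = p := fun p => rfl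
  constructor
  · rintro ⟨h1, h2⟩
    set V : Submodule 𝕜 E := X.comap (ι ∘ₗ LinearMap.inl 𝕜 E F) with hV
    set W : Submodule 𝕜 F := X.comap (ι ∘ₗ LinearMap.inr 𝕜 E F) with hW
    have hVmem : ∀ v : E, v ∈ V ↔ ι (v, 0) ∈ X := fun v => Iff.rfl
    have hWmem : ∀ w : F, w ∈ W ↔ ι (0, w) ∈ X := fun w => Iff.rfl
    have hX : X = Submodule.comap
        ((WithLp.linearEquiv 2 𝕜 (E × F)) : WithLp 2 (E × F) →ₗ[𝕜] E × F) (V.prod W) := by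
      apply le_antisymm
      · intro p hp
        rw [h1] at hp
        obtain ⟨a, ha, b, hb, hab⟩ := Submodule.mem_sup.mp hp
        have ha2 : a.snd = 0 := (hAmem a).mp (Submodule.mem_inf.mp ha).2
        have hb1 : b.fst = 0 := (hAomem b).mp (Submodule.mem_inf.mp hb).2
        have hafst : a = ι (a.fst, 0) := by rw [← ha2]; exact (hιeta a).symm
        have hbsnd : b = ι (0, b.snd) := by rw [← hb1]; exact (hιeta b).symm
        simp only [Submodule.mem_comap, Submodule.mem_prod, LinearEquiv.coe_coe,
          WithLp.linearEquiv_apply, AddEquiv.toFun_eq_coe, WithLp.coe_addEquiv, WithLp.ofLp_fst,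
          WithLp.ofLp_snd]
        constructor
        · have : p.fst = a.fst := by
            rw [← hab, WithLp.add_fst, hb1, add_zero]
          rw [this, hVmem, ← hafst]; exact (Submodule.mem_inf.mp ha).1
        · have : p.snd = b.snd := by
            rw [← hab, WithLp.add_snd, ha2, zero_add]
          rw [this, hWmem, ← hbsnd]; exact (Submodule.mem_inf.mp hb).1
      · intro p hp
        simp only [Submodule.mem_comap, Submodule.mem_prod, LinearEquiv.coe_coe,
          WithLp.linearEquiv_apply, AddEquiv.toFun_eq_coe, WithLp.coe_addEquiv, WithLp.ofLp_fst,
          WithLp.ofLp_snd] at hp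
        have h1' : ι (p.fst, 0) ∈ X := (hVmem p.fst).mp hp.1
        have h2' : ι (0, p.snd) ∈ X := (hWmem p.snd).mp hp.2
        have heq0 : (p.fst, (0:F)) + ((0:E), p.snd) = (p.fst, p.snd) := by simp
        have : ι (p.fst, 0) + ι (0, p.snd) = p := by
          rw [← map_add, heq0]; exact hιeta p
        rw [← this]; exact X.add_mem h1' h2'
    have hXmem : ∀ p : WithLp 2 (E × F), p ∈ X ↔ p.fst ∈ V ∧ p.snd ∈ W := by
      intro p
      rw [hX]
      simp [Submodule.mem_comap, Submodule.mem_prod, LinearEquiv.coe_coe,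
        WithLp.linearEquiv_apply]
    -- T maps V into W
    have hTV : ∀ v ∈ V, T v ∈ W := by
      set V' : Submodule 𝕜 E := (V ⊓ W.comap T) ⊓ V.comap (T.adjoint ∘ₗ T) with hV'
      have hle : V' ≤ V := le_trans inf_le_left inf_le_left
      have hsub : ∀ v ∈ V, ∃ x ∈ V', x + T.adjoint (T x) = v := by
        intro v hv
        have hp : ι (v, 0) ∈ X := (hVmem v).mp hv
        rw [h2] at hp
        obtain ⟨a, ha, b, hb, hab⟩ := Submodule.mem_sup.mp hp
        have haB : a.snd = T a.fst := (hBmem a).mp (Submodule.mem_inf.mp ha).2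
        have hbB : b.fst + T.adjoint b.snd = 0 := (hBomem b).mp (Submodule.mem_inf.mp hb).2
        have haX := (hXmem a).mp (Submodule.mem_inf.mp ha).1
        have hbX := (hXmem b).mp (Submodule.mem_inf.mp hb).1
        have habf : a.fst + b.fst = v := by
          rw [← WithLp.add_fst, hab, hιfst]
        have habs : a.snd + b.snd = 0 := by
          rw [← WithLp.add_snd, hab, hιsnd]
        refine ⟨a.fst, Submodule.mem_inf.mpr ⟨Submodule.mem_inf.mpr ⟨haX.1, ?_⟩, ?_⟩, ?_⟩
        · rw [Submodule.mem_comap, ← haB]; exact haX.2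
        · rw [Submodule.mem_comap, LinearMap.comp_apply, ← haB]
          have h5 : a.snd = -b.snd := eq_neg_of_add_eq_zero_left habs
          have : T.adjoint a.snd = b.fst := by
            rw [h5, map_neg]
            exact neg_eq_of_add_eq_zero_left hbB
          rw [this]; exact hbX.1
        · have h5 : a.snd = -b.snd := eq_neg_of_add_eq_zero_left habs
          have : T.adjoint (T a.fst) = b.fst := by
            rw [← haB, h5, map_neg]
            exact neg_eq_of_add_eq_zero_left hbB
          rw [this]; exact habf
      have hVeq : V = V' := aux_eqsub T V V' hle hsub
      intro v hv
      rw [hVeq] at hv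
      exact (Submodule.mem_inf.mp (Submodule.mem_inf.mp hv).1).2
    -- adjoint T maps W into V
    have hTW : ∀ w ∈ W, T.adjoint w ∈ V := by
      set W' : Submodule 𝕜 F := (W ⊓ V.comap T.adjoint) ⊓
        W.comap ((T.adjoint).adjoint ∘ₗ T.adjoint) with hW'
      have hle : W' ≤ W := le_trans inf_le_left inf_le_left
      have hsub : ∀ w ∈ W, ∃ y ∈ W', y + (T.adjoint).adjoint (T.adjoint y) = w := by
        intro w hw
        have hp : ι (0, w) ∈ X := (hWmem w).mp hw
        rw [h2] at hp
        obtain ⟨a, ha, b, hb, hab⟩ := Submodule.mem_sup.mp hp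
        have haB : a.snd = T a.fst := (hBmem a).mp (Submodule.mem_inf.mp ha).2
        have hbB : b.fst + T.adjoint b.snd = 0 := (hBomem b).mp (Submodule.mem_inf.mp hb).2
        have haX := (hXmem a).mp (Submodule.mem_inf.mp ha).1
        have hbX := (hXmem b).mp (Submodule.mem_inf.mp hb).1
        have habf : a.fst + b.fst = 0 := by
          rw [← WithLp.add_fst, hab, hιfst]
        have habs : a.snd + b.snd = w := by
          rw [← WithLp.add_snd, hab, hιsnd]
        have hTb : T.adjoint b.snd = a.fst :=
          (neg_eq_of_add_eq_zero_right hbB).symm.trans (neg_eq_of_add_eq_zero_left habf)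
        refine ⟨b.snd, Submodule.mem_inf.mpr ⟨Submodule.mem_inf.mpr ⟨hbX.2, ?_⟩, ?_⟩, ?_⟩
        · rw [Submodule.mem_comap, hTb]; exact haX.1
        · rw [Submodule.mem_comap, LinearMap.comp_apply, hTb,
            LinearMap.adjoint_adjoint, ← haB]
          exact haX.2
        · rw [hTb, LinearMap.adjoint_adjoint, ← haB, add_comm]
          exact habs
      have hWeq : W = W' := aux_eqsub T.adjoint W W' hle hsub
      intro w hw
      rw [hWeq] at hw
      exact (Submodule.mem_inf.mp (Submodule.mem_inf.mp hw).1).2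
    exact ⟨V, W, hTV, hTW, hX⟩
  · rintro ⟨V, W, hTV, hTW, hX⟩
    have hXmem : ∀ p : WithLp 2 (E × F), p ∈ X ↔ p.fst ∈ V ∧ p.snd ∈ W := by
      intro p
      rw [hX]
      simp [Submodule.mem_comap, Submodule.mem_prod, LinearEquiv.coe_coe,
        WithLp.linearEquiv_apply]
    constructor
    · apply le_antisymm _ (sup_le inf_le_left inf_le_left)
      intro p hp
      have hp' := (hXmem p).mp hp
      rw [Submodule.mem_sup]
      refine ⟨ι (p.fst, 0), Submodule.mem_inf.mpr ⟨?_, ?_⟩,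
        ι (0, p.snd), Submodule.mem_inf.mpr ⟨?_, ?_⟩, ?_⟩
      · rw [hXmem]; constructor <;> simp [hιfst, hιsnd, hp'.1]
      · rw [hAmem, hιsnd]
      · rw [hXmem]; constructor <;> simp [hιfst, hιsnd, hp'.2]
      · rw [hAomem, hιfst]
      · have heq0 : (p.fst, (0:F)) + ((0:E), p.snd) = (p.fst, p.snd) := by simp
        rw [← map_add, heq0]; exact hιeta p
    · apply le_antisymm _ (sup_le inf_le_left inf_le_left)
      intro p hp
      have hp' := (hXmem p).mp hp
      obtain ⟨hv, hw⟩ := hp'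
      have hLV : ∀ x ∈ V, T.adjoint (T x) ∈ V := fun x hx => hTW _ (hTV x hx)
      have hu : p.fst + T.adjoint p.snd ∈ V := V.add_mem hv (hTW _ hw)
      obtain ⟨x, hxV, hxu⟩ := aux_surj T V hLV hu
      rw [Submodule.mem_sup]
      refine ⟨ι (x, T x), Submodule.mem_inf.mpr ⟨?_, ?_⟩,
        ι (p.fst - x, p.snd - T x), Submodule.mem_inf.mpr ⟨?_, ?_⟩, ?_⟩
      · rw [hXmem]; constructor <;> simp [hιfst, hιsnd, hxV, hTV x hxV]
      · rw [hBmem, hιfst, hιsnd]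
      · rw [hXmem]
        constructor
        · rw [hιfst]; exact V.sub_mem hv hxV
        · rw [hιsnd]; exact W.sub_mem hw (hTV x hxV)
      · rw [hBomem, hιfst, hιsnd, map_sub, sub_add_sub_comm, hxu, sub_self]
      · rw [← map_add]
        have : (x, T x) + (p.fst - x, p.snd - T x) = (p.fst, p.snd) := by
          simp [Prod.ext_iff]
        rw [this, hιeta]
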